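/- Suppose c < 3/5 and Q is a nonnegative, not identically zero, smooth decaying solution of ((5/4)c - 3/4)D^α Q + (c-1)Q - (1/2)Q^{p+1} = 0. Then a contradiction follows; i.e., the equation has no nontrivial nonnegative solutions for c < 3/5 (indeed no positive solitary waves unless c > 1). -/

import Mathlib

/-- The Riesz fractional derivative `D^α`, Fourier multiplier with symbol `|ξ|^α`. -/
noncomputable def fracD (α : ℝ) (f : ℝ → ℂ) : ℝ → ℂ :=
  FourierTransformInv.fourierInv (fun ξ : ℝ => (|ξ| ^ α : ℝ) • FourierTransform.fourier f ξ)

/-- `D^α` acting on real-valued functions. -/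
noncomputable def fracDR (α : ℝ) (f : ℝ → ℝ) : ℝ → ℝ :=
  fun x => (fracD α (fun y => (f y : ℂ)) x).re

open MeasureTheory Real Complex SchwartzMap FourierTransform Filter RealInnerProductSpace

/-- Complexification of a real Schwartz function. -/
noncomputable def SchwartzMap.toComplexMap (Q : SchwartzMap ℝ ℝ) : SchwartzMap ℝ ℂ where
  toFun x := (Q x : ℂ)
  smooth' := Complex.ofRealCLM.contDiff.comp Q.smooth'
  decay' := by
    intro k n
    obtain ⟨C, hC⟩ := Q.decay' k n
    refine ⟨C, fun x => ?_⟩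
    have h : ‖iteratedFDeriv ℝ n (fun y => ((Q y : ℝ) : ℂ)) x‖
        = ‖iteratedFDeriv ℝ n (⇑Q) x‖ :=
      Complex.ofRealLI.norm_iteratedFDeriv_comp_left (i := n) (Q.smooth'.contDiffAt (x := x))
        (by exact_mod_cast le_top)
    rw [h]
    exact hC x

@[simp] lemma SchwartzMap.toComplexMap_apply (Q : SchwartzMap ℝ ℝ) (x : ℝ) :
    Q.toComplexMap x = (Q x : ℂ) := rfl

private lemma arith_aux {A c I1 I2 I3 : ℝ} (hA0 : A < 0) (hI1 : 0 ≤ I1)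
    (h : A * I1 = 1 / 2 * I3 - (c - 1) * I2) (h2 : 0 ≤ I2) (h3 : 0 ≤ I3)
    (hc : c < 3 / 5) : I2 = 0 := by
  have hAI : A * I1 ≤ 0 := mul_nonpos_of_nonpos_of_nonneg hA0.le hI1
  have h1c : (1 - c) * I2 ≤ 0 := by nlinarith
  have h2c : (0:ℝ) < 1 - c := by linarith
  nlinarith

/-- For c < 3/5, the gfBBM profile equation has no nontrivial nonnegative
smooth decaying solution. -/
theorem stmt_16 (α c : ℝ) (hα : 0 < α) (p : ℕ) (hp : 0 < p)
    (hc : c < 3 / 5) (Q : SchwartzMap ℝ ℝ) (hQ : ∀ x : ℝ, 0 ≤ Q x)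
    (heq : ∀ x : ℝ,
      ((5 / 4) * c - 3 / 4) * fracDR α (⇑Q) x + (c - 1) * Q x - (1 / 2) * (Q x) ^ (p + 1) = 0) :
    ∀ x : ℝ, Q x = 0 := by
  classical
  set Qc : SchwartzMap ℝ ℂ := Q.toComplexMap with hQcdef
  set w : SchwartzMap ℝ ℂ := SchwartzMap.fourierTransformCLM ℂ Qc with hwdef
  have hw : ∀ ξ, w ξ = FourierTransform.fourier (⇑Qc) ξ := fun ξ => rfl
  set g : ℝ → ℂ := fun ξ => (|ξ| ^ α : ℝ) • w ξ with hgdef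
  have hfrac : fracD α (fun y => ((Q y : ℝ) : ℂ)) = FourierTransformInv.fourierInv g := rfl
  -- continuity of the symbol
  have habs_cont : Continuous fun ξ : ℝ => (|ξ| ^ α : ℝ) :=
    (Real.continuous_rpow_const hα.le).comp continuous_abs
  have hg_cont : Continuous g := (habs_cont.smul w.continuous)
  -- integrability of g
  have hg_int : Integrable g := by
    set n : ℕ := ⌈α⌉₊ with hn
    have hαn : α ≤ (n : ℝ) := Nat.le_ceil α
    have hmaj : Integrable (fun ξ : ℝ => ‖w ξ‖ + ‖ξ‖ ^ n * ‖w ξ‖) :=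
      w.integrable.norm.add (w.integrable_pow_mul volume n)
    refine hmaj.mono' hg_cont.aestronglyMeasurable ?_
    filter_upwards with ξ
    have h1 : ‖g ξ‖ = |ξ| ^ α * ‖w ξ‖ := by
      rw [hgdef, norm_smul, Real.norm_eq_abs, _root_.abs_of_nonneg (Real.rpow_nonneg (abs_nonneg ξ) α)]
    rw [h1]
    have h2 : |ξ| ^ α ≤ 1 + ‖ξ‖ ^ n := by
      rcases le_or_gt (|ξ|) 1 with h | h
      · have := Real.rpow_le_one (abs_nonneg ξ) h hα.le
        have h3 : (0 : ℝ) ≤ ‖ξ‖ ^ n := by positivity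
        linarith
      · have h4 : |ξ| ^ α ≤ |ξ| ^ (n : ℝ) :=
          Real.rpow_le_rpow_of_exponent_le h.le hαn
        rw [Real.rpow_natCast] at h4
        have h5 : ‖ξ‖ ^ n = |ξ| ^ n := by rw [Real.norm_eq_abs]
        nlinarith [pow_nonneg (abs_nonneg ξ) n]
    have h3 : ‖w ξ‖ ≥ 0 := norm_nonneg _
    calc |ξ| ^ α * ‖w ξ‖ ≤ (1 + ‖ξ‖ ^ n) * ‖w ξ‖ := by
          exact mul_le_mul_of_nonneg_right h2 h3
      _ = ‖w ξ‖ + ‖ξ‖ ^ n * ‖w ξ‖ := by ring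
  -- the inverse Fourier transform of g is continuous and bounded
  have hFg_cont : Continuous (FourierTransformInv.fourierInv g) :=
    VectorFourier.fourierIntegral_continuous Real.continuous_fourierChar
      (by exact (continuous_inner (𝕜 := ℝ) (E := ℝ)).neg) hg_int
  set Cg : ℝ := ∫ ξ, ‖g ξ‖ with hCg
  have hFg_bdd : ∀ x, ‖FourierTransformInv.fourierInv g x‖ ≤ Cg := fun x =>
    VectorFourier.norm_fourierIntegral_le_integral_norm _ _ _ _ _
  -- fracDR in terms of g
  have hfracDR : ∀ x, fracDR α (⇑Q) x = (FourierTransformInv.fourierInv g x).re := by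
    intro x; rw [fracDR, hfrac]
  -- boundedness of Q
  obtain ⟨CQ, hCQ⟩ : ∃ C, ∀ x, ‖Q x‖ ≤ C := by
    refine ⟨‖Q.toBoundedContinuousFunction‖, fun x => ?_⟩
    exact Q.toBoundedContinuousFunction.norm_coe_le_norm x
  -- Integrabilities
  have hint1 : Integrable (fun x => Q x * fracDR α (⇑Q) x) := by
    refine ((Q.integrable (μ := volume)).norm.const_mul Cg).mono'
      ((Q.continuous.mul (Complex.continuous_re.comp hFg_cont)).aestronglyMeasurable) ?_
    · filter_upwards with x
      rw [Real.norm_eq_abs, abs_mul, hfracDR]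
      have h1 : |(FourierTransformInv.fourierInv g x).re| ≤ Cg :=
        le_trans (Complex.abs_re_le_norm _) (hFg_bdd x)
      calc |Q x| * |(FourierTransformInv.fourierInv g x).re| ≤ |Q x| * Cg :=
            mul_le_mul_of_nonneg_left h1 (abs_nonneg _)
        _ = Cg * ‖Q x‖ := by rw [Real.norm_eq_abs]; ring
  have hint1c : Integrable (fun x => Qc x * FourierTransformInv.fourierInv g x) := by
    refine ((Qc.integrable (μ := volume)).norm.const_mul Cg).mono'
      ((Qc.continuous.mul hFg_cont).aestronglyMeasurable) ?_
    filter_upwards with x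
    rw [norm_mul]
    calc ‖Qc x‖ * ‖FourierTransformInv.fourierInv g x‖ ≤ ‖Qc x‖ * Cg :=
          mul_le_mul_of_nonneg_left (hFg_bdd x) (norm_nonneg _)
      _ = Cg * ‖Qc x‖ := by ring
  have hint2 : Integrable (fun x => Q x * Q x) :=
    (Q.integrable (μ := volume)).bdd_mul Q.continuous.aestronglyMeasurable (ae_of_all _ hCQ)
  have hint3 : Integrable (fun x => Q x ^ (p + 2)) := by
    have h : Integrable (fun x => Q x ^ (p + 1) * Q x) := by
      refine (Q.integrable (μ := volume)).bdd_mul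
        ((Q.continuous.pow (p+1)).aestronglyMeasurable) (c := CQ ^ (p + 1)) (ae_of_all _ fun x => ?_)
      rw [Real.norm_eq_abs, _root_.abs_pow]
      exact pow_le_pow_left₀ (abs_nonneg _) (hCQ x) (p + 1)
    refine h.congr (Eventually.of_forall fun x => ?_)
    ring
  -- The key sign fact: ∫ Q * D^α Q ≥ 0
  have hI1 : 0 ≤ ∫ x, Q x * fracDR α (⇑Q) x := by
    -- rewrite as real part of complex integral
    have e1 : ∀ x, Q x * fracDR α (⇑Q) x = (Qc x * FourierTransformInv.fourierInv g x).re := by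
      intro x
      rw [hfracDR]
      have : Qc x = ((Q x : ℝ) : ℂ) := rfl
      rw [this, Complex.re_ofReal_mul]
    have e1' : (∫ x, Q x * fracDR α (⇑Q) x) = (∫ x, Qc x * FourierTransformInv.fourierInv g x).re := by
      rw [integral_congr_ae (Eventually.of_forall e1)]
      exact integral_re hint1c
    rw [e1']
    -- use the multiplication formula
    have e2 : (∫ x, Qc x * FourierTransformInv.fourierInv g x)
        = ∫ x, FourierTransformInv.fourierInv g x * Qc x := by
      congr 1; ext x; ring
    have hLflip : (-innerₗ ℝ).flip = -innerₗ ℝ := by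
      ext x y
      simp [real_inner_comm]
    have e3 : (∫ x, FourierTransformInv.fourierInv g x * Qc x)
        = ∫ ξ, g ξ * FourierTransformInv.fourierInv (⇑Qc) ξ := by
      have := VectorFourier.integral_bilin_fourierIntegral_eq_flip
        (E := ℂ) (F := ℂ) (G := ℂ) (μ := volume) (ν := volume)
        (L := -innerₗ ℝ) (f := g) (g := ⇑Qc)
        (ContinuousLinearMap.mul ℂ ℂ) Real.continuous_fourierChar
        (by exact (continuous_inner (𝕜 := ℝ) (E := ℝ)).neg) hg_int Qc.integrable
      rw [hLflip] at this
      exact this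
    -- inverse transform of a real function is the conjugate of the transform
    have e4 : ∀ ξ, FourierTransformInv.fourierInv (⇑Qc) ξ = starRingEnd ℂ (w ξ) := by
      intro ξ
      rw [hw, Real.fourier_eq', ← integral_conj, Real.fourierInv_eq']
      refine integral_congr_ae (Eventually.of_forall fun v => ?_)
      have hQcv : (starRingEnd ℂ) (Qc v) = Qc v := by
        simp [hQcdef, Complex.conj_ofReal]
      simp only [smul_eq_mul, map_mul, hQcv, ← Complex.exp_conj,
        Complex.conj_ofReal, Complex.conj_I]
      congr 2
      push_cast
      ring
    have e5 : (∫ ξ, g ξ * FourierTransformInv.fourierInv (⇑Qc) ξ)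
        = ∫ ξ, g ξ * starRingEnd ℂ (w ξ) := by
      simp only [e4]
    have hint4 : Integrable (fun ξ => g ξ * starRingEnd ℂ (w ξ)) := by
      have h4 : Integrable (fun ξ => starRingEnd ℂ (w ξ) * g ξ) := by
        refine hg_int.bdd_mul (c := ‖w.toBoundedContinuousFunction‖) ?_ ?_
        · exact (Complex.continuous_conj.comp w.continuous).aestronglyMeasurable
        · exact ae_of_all _ fun ξ => by
            rw [RCLike.norm_conj]; exact w.toBoundedContinuousFunction.norm_coe_le_norm ξ
      exact h4.congr (Eventually.of_forall fun ξ => mul_comm _ _)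
    rw [e2, e3, e5]
    have e6 : (∫ ξ, g ξ * starRingEnd ℂ (w ξ)).re
        = ∫ ξ, (g ξ * starRingEnd ℂ (w ξ)).re := (integral_re hint4).symm
    rw [e6]
    refine integral_nonneg fun ξ => ?_
    have : g ξ * starRingEnd ℂ (w ξ) = ((|ξ| ^ α : ℝ) : ℂ) * (w ξ * starRingEnd ℂ (w ξ)) := by
      rw [hgdef]; push_cast [Complex.real_smul]; ring
    rw [this, Complex.mul_conj, ← Complex.ofReal_mul, Complex.ofReal_re]
    exact mul_nonneg (Real.rpow_nonneg (abs_nonneg ξ) α) (Complex.normSq_nonneg _)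
  -- Integrate the equation multiplied by Q
  set A : ℝ := 5 / 4 * c - 3 / 4 with hA
  have hA0 : A < 0 := by rw [hA]; linarith
  have hptwise : ∀ x, A * (Q x * fracDR α (⇑Q) x)
      = 1 / 2 * Q x ^ (p + 2) - (c - 1) * (Q x * Q x) := by
    intro x
    linear_combination Q x * heq x
  have hintegral : A * ∫ x, Q x * fracDR α (⇑Q) x
      = 1 / 2 * (∫ x, Q x ^ (p + 2)) - (c - 1) * ∫ x, Q x * Q x := by
    calc A * ∫ x, Q x * fracDR α (⇑Q) x
        = ∫ x, A * (Q x * fracDR α (⇑Q) x) := (integral_const_mul A _).symm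
      _ = ∫ x, (1 / 2 * Q x ^ (p + 2) - (c - 1) * (Q x * Q x)) :=
          integral_congr_ae (Eventually.of_forall hptwise)
      _ = (∫ x, 1 / 2 * Q x ^ (p + 2)) - ∫ x, (c - 1) * (Q x * Q x) :=
          integral_sub (hint3.const_mul _) (hint2.const_mul _)
      _ = 1 / 2 * (∫ x, Q x ^ (p + 2)) - (c - 1) * ∫ x, Q x * Q x := by
          rw [integral_const_mul, integral_const_mul]
  have hI2 : (0:ℝ) ≤ ∫ x, Q x * Q x := integral_nonneg fun x => mul_nonneg (hQ x) (hQ x)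
  have hI3 : (0:ℝ) ≤ ∫ x, Q x ^ (p + 2) := integral_nonneg fun x => pow_nonneg (hQ x) _
  have hI2z : (∫ x, Q x * Q x) = 0 := arith_aux hA0 hI1 hintegral hI2 hI3 hc
  -- conclude pointwise vanishing
  have hzero : (fun x => Q x * Q x) = fun _ => (0:ℝ) := by
    rw [← (show Continuous (fun x => Q x * Q x) from Q.continuous.mul Q.continuous).ae_eq_iff_eq volume continuous_const]
    exact (integral_eq_zero_iff_of_nonneg (fun x => mul_nonneg (hQ x) (hQ x)) hint2).mp hI2z
  intro x
  have := congrFun hzero x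
  exact mul_self_eq_zero.mp this
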